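/- arXiv:1710.07732 — 6 statements merged into one kernel-verified Lean document; each statement's English description precedes it below -/
import Mathlib

section
/- Let π be a probability density on F with respect to ρ, and for each z^n let π̂(·|z^n) be a probability density on F with respect to ρ. Define w(z^n, f) := π(f)/π̂(f|z^n). Then the generalized Shtarkov integral S(F, Π̂, w) := E_{Z^n∼P}[exp(−E_{f∼Π̂|Z^n}[η R_f(Z^n) + log C(f) − log w(Z^n,f)])] satisfies S(F, Π̂, w) ≤ 1, where C(f) = E_{Z^n∼P}[exp(−η R_f(Z^n))] and R_f(z^n) = Σ_i (ℓ_f(z_i) − ℓ_{f*}(z_i)). -/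
open MeasureTheory
open scoped NNReal ENNReal

/-- Proposition 1 (first part): with luckiness function w(z^n,f) = π(f)/π̂(f|z^n),
the generalized Shtarkov integral S(F, Π̂, w) is at most 1. -/
theorem generalized_shtarkov_le_one {Zn F : Type*} [MeasurableSpace Zn] [MeasurableSpace F]
    (μ : Measure Zn) [IsProbabilityMeasure μ] (ρ : Measure F) [SigmaFinite ρ]
    (η : ℝ) (hη : 0 < η)
    (R : F → Zn → ℝ) (hmeas : Measurable (Function.uncurry R))
    (π : F → ℝ) (πhat : Zn → F → ℝ)
    (hπpos : ∀ f, 0 < π f) (hπhatpos : ∀ zn f, 0 < πhat zn f)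
    (hmeasπ : Measurable π) (hmeasπhat : Measurable (Function.uncurry πhat))
    (hπ1 : ∫ f, π f ∂ρ = 1) (hπhat1 : ∀ zn, ∫ f, πhat zn f ∂ρ = 1)
    (C : F → ℝ) (hC : ∀ f, C f = ∫ zn, Real.exp (-η * R f zn) ∂μ)
    (hCpos : ∀ f, 0 < C f)
    (hq1 : ∀ f, ∫ zn, Real.exp (-η * R f zn) / C f ∂μ = 1)
    (w : Zn → F → ℝ) (hw : ∀ zn f, w zn f = π f / πhat zn f)
    (hFub : Integrable (fun p : Zn × F =>
        πhat p.1 p.2 * (Real.exp (-η * R p.2 p.1) / C p.2) * w p.1 p.2) (μ.prod ρ))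
    (hinner : ∀ zn, Integrable (fun f =>
        πhat zn f * (η * R f zn + Real.log (C f) - Real.log (w zn f))) ρ) :
    ∫ zn, Real.exp (- ∫ f, πhat zn f *
        (η * R f zn + Real.log (C f) - Real.log (w zn f)) ∂ρ) ∂μ ≤ 1 := by
  have hwpos : ∀ zn f, 0 < w zn f := fun zn f => by
    rw [hw]; exact div_pos (hπpos f) (hπhatpos zn f)
  -- pointwise identity
  have hexpX : ∀ zn f, Real.exp (-(η * R f zn + Real.log (C f) - Real.log (w zn f)))
      = Real.exp (-η * R f zn) / C f * w zn f := by
    intro zn f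
    rw [show -(η * R f zn + Real.log (C f) - Real.log (w zn f))
        = (-η * R f zn) + (-(Real.log (C f))) + Real.log (w zn f) by ring]
    rw [Real.exp_add, Real.exp_add, Real.exp_neg, Real.exp_log (hCpos f),
      Real.exp_log (hwpos zn f)]
    ring
  have hint_eq : ∀ zn f, πhat zn f * (Real.exp (-η * R f zn) / C f) * w zn f
      = π f * (Real.exp (-η * R f zn) / C f) := by
    intro zn f
    rw [hw, show πhat zn f * (Real.exp (-η * R f zn) / C f) * (π f / πhat zn f)
      = (πhat zn f / πhat zn f) * (π f * (Real.exp (-η * R f zn) / C f)) from by ring,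
      div_self (hπhatpos zn f).ne', one_mul]
  set G : Zn → ℝ := fun zn =>
    ∫ f, πhat zn f * (Real.exp (-η * R f zn) / C f) * w zn f ∂ρ with hGdef
  have hG_int : Integrable G μ := hFub.integral_prod_left
  have hG_eq_one : ∫ zn, G zn ∂μ = 1 := by
    have hsw := integral_integral_swap
      (f := fun zn f => πhat zn f * (Real.exp (-η * R f zn) / C f) * w zn f) hFub
    rw [hGdef]
    rw [hsw]
    have hfix : ∀ f : F,
        (∫ zn, πhat zn f * (Real.exp (-η * R f zn) / C f) * w zn f ∂μ) = π f := by
      intro f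
      have h1 : (fun zn => πhat zn f * (Real.exp (-η * R f zn) / C f) * w zn f)
          = fun zn => π f * (Real.exp (-η * R f zn) / C f) := funext fun zn => hint_eq zn f
      rw [h1, integral_const_mul, hq1 f, mul_one]
    rw [integral_congr_ae (Filter.Eventually.of_forall hfix)]
    exact hπ1
  have key : ∀ᵐ zn ∂μ, Real.exp (- ∫ f, πhat zn f *
      (η * R f zn + Real.log (C f) - Real.log (w zn f)) ∂ρ) ≤ G zn := by
    filter_upwards [hFub.prod_right_ae] with zn hsec
    have hπhat_meas : Measurable (fun f => πhat zn f) :=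
      hmeasπhat.comp measurable_prodMk_left
    set d : F → ℝ≥0 := fun f => (πhat zn f).toNNReal with hd
    have hd_meas : Measurable d := hπhat_meas.real_toNNReal
    have hd_coe : ∀ f, (d f : ℝ) = πhat zn f := fun f =>
      Real.coe_toNNReal _ (hπhatpos zn f).le
    have hπhat_int : Integrable (fun f => πhat zn f) ρ := by
      by_contra h
      have := hπhat1 zn
      rw [integral_undef h] at this
      norm_num at this
    have hprob : IsProbabilityMeasure (ρ.withDensity (fun f => (d f : ℝ≥0∞))) := by
      constructor
      rw [withDensity_apply _ MeasurableSet.univ, setLIntegral_univ,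
        lintegral_coe_eq_integral d (by simpa only [hd_coe] using hπhat_int)]
      simp only [hd_coe]
      rw [hπhat1 zn]
      simp
    set ν : Measure F := ρ.withDensity (fun f => (d f : ℝ≥0∞)) with hν
    have hXint : Integrable (fun f => η * R f zn + Real.log (C f) - Real.log (w zn f)) ν := by
      rw [hν, integrable_withDensity_iff_integrable_smul hd_meas]
      refine (hinner zn).congr (Filter.Eventually.of_forall fun f => ?_)
      simp only [NNReal.smul_def, hd_coe, smul_eq_mul]
    have hExpint : Integrable
        (fun f => Real.exp (-(η * R f zn + Real.log (C f) - Real.log (w zn f)))) ν := by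
      rw [hν, integrable_withDensity_iff_integrable_smul hd_meas]
      refine hsec.congr (Filter.Eventually.of_forall fun f => ?_)
      simp only [NNReal.smul_def, hd_coe, smul_eq_mul, hexpX]
      ring
    have hJ := convexOn_exp.map_integral_le (μ := ν)
      (f := fun f => -(η * R f zn + Real.log (C f) - Real.log (w zn f)))
      Real.continuous_exp.continuousOn isClosed_univ
      (Filter.Eventually.of_forall fun f => Set.mem_univ _) hXint.neg
      (by exact hExpint)
    rw [integral_neg] at hJ
    have hL : ∫ f, η * R f zn + Real.log (C f) - Real.log (w zn f) ∂ν
        = ∫ f, πhat zn f * (η * R f zn + Real.log (C f) - Real.log (w zn f)) ∂ρ := by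
      rw [hν, integral_withDensity_eq_integral_smul hd_meas]
      exact integral_congr_ae (Filter.Eventually.of_forall fun f => by
        simp only [NNReal.smul_def, hd_coe, smul_eq_mul])
    have hRHS : ∫ f, Real.exp (-(η * R f zn + Real.log (C f) - Real.log (w zn f))) ∂ν
        = G zn := by
      rw [hν, integral_withDensity_eq_integral_smul hd_meas, hGdef]
      exact integral_congr_ae (Filter.Eventually.of_forall fun f => by
        simp only [NNReal.smul_def, hd_coe, smul_eq_mul, hexpX]; ring)
    rw [hL] at hJ
    rw [← hRHS]
    exact hJ
  calc ∫ zn, Real.exp (- ∫ f, πhat zn f *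
        (η * R f zn + Real.log (C f) - Real.log (w zn f)) ∂ρ) ∂μ
      ≤ ∫ zn, G zn ∂μ := integral_mono_of_nonneg
        (Filter.Eventually.of_forall fun zn => (Real.exp_pos _).le) hG_int key
    _ = 1 := hG_eq_one
end

section
/- For every randomized estimator Π̂ and every luckiness function w : Z^n × F → [0,∞), the exponential moment identity holds: E_{Z^n∼P}[exp(nη·(E_{f∼Π̂|Z^n}[E^{(η)}_{Z̄∼P}[R_f(Z̄)]] − (1/n) comp^full(F, Π̂, w, Z^n)))] = 1, i.e., the annealed excess risk of Π̂ is stochastically bounded (with equality of exponential moments) by comp^full/n at rate nη. -/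
open MeasureTheory

/-- Theorem 1: for any randomized estimator (posterior densities π̂) and any luckiness
function w, the annealed excess risk is bounded by comp^full/n as an equality of
exponential moments at rate nη:
E_{Z^n}[exp(nη(E_{f∼Π̂|Z^n}[annealed risk of f] - comp^full/n))] = 1. -/
theorem exponential_moment_identity {Z F : Type*} [MeasurableSpace Z] [MeasurableSpace F]
    (P : Measure Z) [IsProbabilityMeasure P] (ρ : Measure F) [SigmaFinite ρ]
    (n : ℕ) (hn : 0 < n) (η : ℝ) (hη : 0 < η)
    (ℓ : F → Z → ℝ) (fstar : F)
    (R1 : F → Z → ℝ) (hR1 : ∀ f z, R1 f z = ℓ f z - ℓ fstar z)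
    (hbdd : ∀ f z, |R1 f z| ≤ 1/2)
    (hmeas : Measurable (Function.uncurry R1))
    (Rn : F → (Fin n → Z) → ℝ) (hRn : ∀ f zn, Rn f zn = ∑ i, R1 f (zn i))
    (C : F → ℝ)
    (hC : ∀ f, C f = ∫ zn, Real.exp (-η * Rn f zn) ∂(Measure.pi fun _ : Fin n => P))
    (w : (Fin n → Z) → F → ℝ) (hwpos : ∀ zn f, 0 < w zn f)
    (πhat : (Fin n → Z) → F → ℝ) (hπhatpos : ∀ zn f, 0 ≤ πhat zn f)
    (hπhat1 : ∀ zn, ∫ f, πhat zn f ∂ρ = 1)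
    (hmeasπhat : Measurable (Function.uncurry πhat))
    (S : ℝ)
    (hS : S = ∫ zn, Real.exp (- ∫ f, πhat zn f *
        (η * Rn f zn + Real.log (C f) - Real.log (w zn f)) ∂ρ)
        ∂(Measure.pi fun _ : Fin n => P))
    (hSpos : 0 < S)
    (hint1 : ∀ zn, Integrable (fun f => πhat zn f * Rn f zn) ρ)
    (hint2 : ∀ zn, Integrable (fun f => πhat zn f * Real.log (C f)) ρ)
    (hint3 : ∀ zn, Integrable (fun f => πhat zn f * Real.log (w zn f)) ρ)
    (hint4 : ∀ zn, Integrable (fun f =>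
        πhat zn f * Real.log (∫ z, Real.exp (-η * R1 f z) ∂P)) ρ)
    (comp compfull : (Fin n → Z) → ℝ)
    (hcomp : ∀ zn, comp zn =
        (1/η) * ((∫ f, πhat zn f * (- Real.log (w zn f)) ∂ρ) + Real.log S))
    (hcompfull : ∀ zn, compfull zn = comp zn + ∫ f, πhat zn f * Rn f zn ∂ρ) :
    ∫ zn, Real.exp ((n * η) *
        ((∫ f, πhat zn f * (-(1/η) * Real.log (∫ z, Real.exp (-η * R1 f z) ∂P)) ∂ρ)
          - (1/(n:ℝ)) * compfull zn)) ∂(Measure.pi fun _ : Fin n => P) = 1 := by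
  have hη' : η ≠ 0 := hη.ne'
  have hn' : (n : ℝ) ≠ 0 := Nat.cast_ne_zero.mpr hn.ne'
  -- C f = (∫ exp(-η R1 f)) ^ n by Fubini
  have hCpow : ∀ f, C f = (∫ z, Real.exp (-η * R1 f z) ∂P) ^ n := by
    intro f
    rw [hC]
    have hrw : ∀ zn : Fin n → Z,
        Real.exp (-η * Rn f zn) = ∏ i, Real.exp (-η * R1 f (zn i)) := by
      intro zn; rw [hRn, Finset.mul_sum, Real.exp_sum]
    simp_rw [hrw]
    letI : MeasureSpace Z := ⟨P⟩
    haveI : SigmaFinite (volume : Measure Z) := inferInstanceAs (SigmaFinite P)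
    have h := MeasureTheory.integral_fintype_prod_volume_eq_pow (𝕜 := ℝ) (ι := Fin n)
      (fun z => Real.exp (-η * R1 f z))
    have h2 : (volume : Measure (Fin n → Z)) = Measure.pi fun _ : Fin n => P := by
      rw [MeasureTheory.volume_pi]; rfl
    rw [h2] at h
    rw [Fintype.card_fin] at h; exact h
  have hlogC : ∀ f, Real.log (C f) =
      (n : ℝ) * Real.log (∫ z, Real.exp (-η * R1 f z) ∂P) := by
    intro f; rw [hCpow f, Real.log_pow]
  have key : ∀ zn : Fin n → Z,
      Real.exp ((n * η) *
        ((∫ f, πhat zn f * (-(1/η) * Real.log (∫ z, Real.exp (-η * R1 f z) ∂P)) ∂ρ)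
          - (1/(n:ℝ)) * compfull zn))
      = Real.exp (- ∫ f, πhat zn f *
          (η * Rn f zn + Real.log (C f) - Real.log (w zn f)) ∂ρ) * S⁻¹ := by
    intro zn
    set A := ∫ f, πhat zn f * Rn f zn ∂ρ with hA
    set L := ∫ f, πhat zn f * Real.log (∫ z, Real.exp (-η * R1 f z) ∂P) ∂ρ with hL
    set W := ∫ f, πhat zn f * Real.log (w zn f) ∂ρ with hW
    have h1 : ∫ f, πhat zn f * (-(1/η) * Real.log (∫ z, Real.exp (-η * R1 f z) ∂P)) ∂ρ
        = -(1/η) * L := by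
      rw [hL, ← integral_const_mul]
      congr 1; ext f; ring
    have hw' : ∫ f, πhat zn f * (- Real.log (w zn f)) ∂ρ = -W := by
      rw [hW, ← integral_neg]
      congr 1; ext f; ring
    have hlogCint : ∫ f, πhat zn f * Real.log (C f) ∂ρ = (n : ℝ) * L := by
      rw [hL, ← integral_const_mul]
      congr 1; ext f; rw [hlogC f]; ring
    have hinner : ∫ f, πhat zn f *
        (η * Rn f zn + Real.log (C f) - Real.log (w zn f)) ∂ρ
        = η * A + (n : ℝ) * L - W := by
      have e1 : (fun f => πhat zn f *
          (η * Rn f zn + Real.log (C f) - Real.log (w zn f)))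
          = fun f => (η * (πhat zn f * Rn f zn) + πhat zn f * Real.log (C f))
              - πhat zn f * Real.log (w zn f) := by
        ext f; ring
      have hI1 : Integrable (fun f => η * (πhat zn f * Rn f zn)) ρ :=
        (hint1 zn).const_mul η
      have hI : Integrable
          (fun f => η * (πhat zn f * Rn f zn) + πhat zn f * Real.log (C f)) ρ :=
        hI1.add (hint2 zn)
      rw [e1, integral_sub hI (hint3 zn), integral_add hI1 (hint2 zn),
        integral_const_mul, hlogCint, ← hA, ← hW]
    rw [hinner, hcompfull, hcomp, hw', h1]
    have hSinv : S⁻¹ = Real.exp (-Real.log S) := by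
      rw [Real.exp_neg, Real.exp_log hSpos]
    rw [hSinv, ← Real.exp_add]
    congr 1
    field_simp
    ring
  calc ∫ zn, Real.exp ((n * η) *
        ((∫ f, πhat zn f * (-(1/η) * Real.log (∫ z, Real.exp (-η * R1 f z) ∂P)) ∂ρ)
          - (1/(n:ℝ)) * compfull zn)) ∂(Measure.pi fun _ : Fin n => P)
      = ∫ zn, Real.exp (- ∫ f, πhat zn f *
          (η * Rn f zn + Real.log (C f) - Real.log (w zn f)) ∂ρ) * S⁻¹
          ∂(Measure.pi fun _ : Fin n => P) := by
        exact integral_congr_ae (Filter.Eventually.of_forall key)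
    _ = (∫ zn, Real.exp (- ∫ f, πhat zn f *
          (η * Rn f zn + Real.log (C f) - Real.log (w zn f)) ∂ρ)
          ∂(Measure.pi fun _ : Fin n => P)) * S⁻¹ := integral_mul_const _ _
    _ = 1 := by rw [← hS]; exact mul_inv_cancel₀ hSpos.ne'
end

section
/- Suppose for all f ∈ F that R_f(Z) ∈ [−1/2, 1/2] a.s. and the β-Bernstein condition E[R_f(Z)²] ≤ B·E[R_f(Z)]^β holds for all f ∈ F with β ∈ [0,1] and B > 0. Then the v-central condition holds with v(γ) = min{γ^{1−β}/B, 1}: for all γ > 0 and all f ∈ F, E[exp(−v(γ) R_f(Z))] ≤ exp(v(γ)·γ). -/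
open MeasureTheory

/-- `e^{-u} ≤ 1 - u + u²` for `|u| ≤ 1`. -/
lemma exp_neg_le_quad {u : ℝ} (h : |u| ≤ 1) :
    Real.exp (-u) ≤ 1 - u + u ^ 2 := by
  have h' : |(-u)| ≤ 1 := by rwa [abs_neg]
  have hb := Real.exp_bound h' (n := 2) (by norm_num)
  have hsum : ∑ i ∈ Finset.range 2, (-u) ^ i / (Nat.factorial i : ℝ) = 1 - u := by
    simp [Finset.sum_range_succ]
    ring
  rw [hsum] at hb
  norm_num [Nat.factorial] at hb
  have habs := abs_le.mp hb
  have h2 : |(-u)| ^ 2 = u ^ 2 := by rw [abs_neg, sq_abs]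
  nlinarith [habs.2]

/-- Weighted geometric mean is at most the sum. -/
lemma geom_le_add {γ μ β : ℝ} (hγ : 0 < γ) (hμ : 0 ≤ μ) (hβ0 : 0 ≤ β) (hβ1 : β ≤ 1) :
    γ ^ (1 - β) * μ ^ β ≤ γ + μ := by
  rcases le_total μ γ with h | h
  · have h1 : μ ^ β ≤ γ ^ β := Real.rpow_le_rpow hμ h hβ0
    have h2 : γ ^ (1 - β) * μ ^ β ≤ γ ^ (1 - β) * γ ^ β :=
      mul_le_mul_of_nonneg_left h1 (Real.rpow_nonneg hγ.le _)
    have h3 : γ ^ (1 - β) * γ ^ β = γ := by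
      rw [← Real.rpow_add hγ]; norm_num
    linarith
  · have hμpos : 0 < μ := lt_of_lt_of_le hγ h
    have h1 : γ ^ (1 - β) ≤ μ ^ (1 - β) := Real.rpow_le_rpow hγ.le h (by linarith)
    have h2 : γ ^ (1 - β) * μ ^ β ≤ μ ^ (1 - β) * μ ^ β :=
      mul_le_mul_of_nonneg_right h1 (Real.rpow_nonneg hμ _)
    have h3 : μ ^ (1 - β) * μ ^ β = μ := by
      rw [← Real.rpow_add hμpos]; norm_num
    linarith

/-- Lemma 1: the β-Bernstein condition implies the v-central condition with
v(γ) = min{γ^{1-β}/B, 1}, for excess losses bounded in [-1/2, 1/2]. -/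
theorem bernstein_implies_central {Ω F : Type*} [MeasurableSpace Ω]
    (P : Measure Ω) [IsProbabilityMeasure P]
    (R : F → Ω → ℝ) (β B : ℝ) (hβ0 : 0 ≤ β) (hβ1 : β ≤ 1) (hB : 0 < B)
    (hmeas : ∀ f, Measurable (R f))
    (hbdd : ∀ f, ∀ᵐ ω ∂P, R f ω ∈ Set.Icc (-(1/2) : ℝ) (1/2))
    (hmean : ∀ f, 0 ≤ ∫ ω, R f ω ∂P)
    (hBern : ∀ f, ∫ ω, (R f ω)^2 ∂P ≤ B * (∫ ω, R f ω ∂P) ^ β)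
    (v : ℝ → ℝ) (hv : ∀ γ, v γ = min (γ ^ (1 - β) / B) 1) :
    ∀ γ > 0, ∀ f, ∫ ω, Real.exp (-(v γ) * R f ω) ∂P ≤ Real.exp (v γ * γ) := by
  intro γ hγ f
  set η := v γ with hηdef
  set g := R f with hgdef
  set μ := ∫ ω, g ω ∂P with hμdef
  have hgm := hmeas f
  have hgb := hbdd f
  have hμ0 : 0 ≤ μ := hmean f
  have hrpos : 0 < γ ^ (1 - β) := Real.rpow_pos_of_pos hγ _
  have hη0 : 0 < η := by
    rw [hηdef, hv]; exact lt_min (div_pos hrpos hB) one_pos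
  have hη1 : η ≤ 1 := by rw [hηdef, hv]; exact min_le_right _ _
  have hηB : η ≤ γ ^ (1 - β) / B := by rw [hηdef, hv]; exact min_le_left _ _
  -- integrability
  have int1 : Integrable g P := by
    refine (integrable_const (1/2 : ℝ)).mono' hgm.aestronglyMeasurable ?_
    filter_upwards [hgb] with ω hω
    rw [Real.norm_eq_abs, abs_le]
    exact ⟨by linarith [hω.1], hω.2⟩
  have int2 : Integrable (fun ω => (g ω) ^ 2) P := by
    refine (integrable_const (1 : ℝ)).mono' (hgm.pow_const 2).aestronglyMeasurable ?_
    filter_upwards [hgb] with ω hω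
    rw [Real.norm_eq_abs, abs_of_nonneg (sq_nonneg _)]
    nlinarith [hω.1, hω.2]
  have int3 : Integrable (fun ω => Real.exp (-η * g ω)) P := by
    refine (integrable_const (Real.exp 1)).mono'
      ((hgm.const_mul (-η)).exp).aestronglyMeasurable ?_
    filter_upwards [hgb] with ω hω
    rw [Real.norm_eq_abs, abs_of_nonneg (Real.exp_pos _).le]
    apply Real.exp_le_exp.mpr
    nlinarith [hω.1, hω.2]
  have int4 : Integrable (fun ω => 1 - η * g ω + η ^ 2 * (g ω) ^ 2) P :=
    ((integrable_const 1).sub (int1.const_mul η)).add (int2.const_mul (η ^ 2))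
  -- pointwise bound
  have hpt : ∀ᵐ ω ∂P, Real.exp (-η * g ω) ≤ 1 - η * g ω + η ^ 2 * (g ω) ^ 2 := by
    filter_upwards [hgb] with ω hω
    have habs : |η * g ω| ≤ 1 := by
      rw [abs_mul, abs_of_nonneg hη0.le]
      have : |g ω| ≤ 1/2 := abs_le.mpr ⟨by linarith [hω.1], hω.2⟩
      nlinarith
    have := exp_neg_le_quad habs
    calc Real.exp (-η * g ω) = Real.exp (-(η * g ω)) := by ring_nf
      _ ≤ 1 - η * g ω + (η * g ω) ^ 2 := this
      _ = 1 - η * g ω + η ^ 2 * (g ω) ^ 2 := by ring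
  have hint : ∫ ω, Real.exp (-η * g ω) ∂P ≤ ∫ ω, (1 - η * g ω + η ^ 2 * (g ω) ^ 2) ∂P :=
    integral_mono_ae int3 int4 hpt
  have heval : ∫ ω, (1 - η * g ω + η ^ 2 * (g ω) ^ 2) ∂P
      = 1 - η * μ + η ^ 2 * ∫ ω, (g ω) ^ 2 ∂P := by
    have i5 : Integrable (fun ω => 1 - η * g ω) P := (integrable_const 1).sub (int1.const_mul η)
    have e1 : ∫ ω, (1 - η * g ω + η ^ 2 * (g ω) ^ 2) ∂P
        = (∫ ω, (1 - η * g ω) ∂P) + ∫ ω, η ^ 2 * (g ω) ^ 2 ∂P :=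
      integral_add i5 (int2.const_mul (η ^ 2))
    have e2 : ∫ ω, (1 - η * g ω) ∂P = (∫ ω, (1:ℝ) ∂P) - ∫ ω, η * g ω ∂P :=
      integral_sub (integrable_const 1) (int1.const_mul η)
    rw [e1, e2, integral_const_mul, integral_const_mul, integral_const]
    simp [μ]
  -- key inequality
  have hkey : η ^ 2 * ∫ ω, (g ω) ^ 2 ∂P ≤ η * γ + η * μ := by
    have h1 : η ^ 2 * ∫ ω, (g ω) ^ 2 ∂P ≤ η ^ 2 * (B * μ ^ β) :=
      mul_le_mul_of_nonneg_left (hBern f) (sq_nonneg _)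
    have h2 : η * B ≤ γ ^ (1 - β) := by
      rw [← le_div_iff₀ hB]; exact hηB
    have h3 : (0:ℝ) ≤ μ ^ β := Real.rpow_nonneg hμ0 _
    have h4 : η * B * μ ^ β ≤ γ ^ (1 - β) * μ ^ β :=
      mul_le_mul_of_nonneg_right h2 h3
    have h5 : γ ^ (1 - β) * μ ^ β ≤ γ + μ := geom_le_add hγ hμ0 hβ0 hβ1
    nlinarith [hη0.le]
  have hfinal : 1 - η * μ + η ^ 2 * ∫ ω, (g ω) ^ 2 ∂P ≤ Real.exp (η * γ) := by
    have := Real.add_one_le_exp (η * γ)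
    linarith
  linarith
end

section
/- Let F be a class of predictors, f_0 ∈ F, Q_{f_0} the entropified distribution with density q_{f_0}(z^n) ∝ p(z^n)exp(−η R_{f_0}(z^n)). Then the maximal complexity satisfies comp_η(F) = (1/η) log ∫ sup_{f∈F} q_f(z^n) dν(z^n) ≤ (1/η) log E_{Z^n∼Q_{f_0}}[exp(η T_n)], where T_n = sup_{f∈F} { Σ_j(ℓ_{f_0}(Z_j) − ℓ_f(Z_j)) − E_{Z^n∼Q_{f_0}}[Σ_j(ℓ_{f_0}(Z_j) − ℓ_f(Z_j))] }. -/
open MeasureTheory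

/-- Lemma 2 of the paper: the maximal complexity comp_η(F) = (1/η) log ∫ sup_f q_f dν^n
is bounded by (1/η) log E_{Z^n∼Q_{f0}}[exp(η T_n)], where T_n is the centered supremum
of the cumulative loss differences. -/
theorem comp_le_exp_moment_Tn {Z F : Type*} [MeasurableSpace Z] [Nonempty F]
    (ν : Measure Z) [SigmaFinite ν] (p : Z → ℝ) (hp : ∀ z, 0 ≤ p z)
    (hmp : Measurable p)
    (P : Measure Z) [IsProbabilityMeasure P]
    (hP : P = ν.withDensity (fun z => ENNReal.ofReal (p z)))
    (ℓ : F → Z → ℝ) (fstar f0 : F) (η : ℝ) (hη : 0 < η)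
    (R : F → Z → ℝ) (hR : ∀ f z, R f z = ℓ f z - ℓ fstar z)
    (A : F → ℝ) (hA : ∀ f, A f = ∫ z, Real.exp (-η * R f z) ∂P)
    (hApos : ∀ f, 0 < A f)
    (n : ℕ)
    (q1 : F → Z → ℝ) (hq1 : ∀ f z, q1 f z = p z * Real.exp (-η * R f z) / A f)
    (qn : F → (Fin n → Z) → ℝ) (hqn : ∀ f zn, qn f zn = ∏ i, q1 f (zn i))
    (νn : Measure (Fin n → Z)) (hνn : νn = Measure.pi fun _ => ν)
    (Qf0 : Measure (Fin n → Z))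
    (hQ : Qf0 = νn.withDensity fun zn => ENNReal.ofReal (qn f0 zn))
    (T : (Fin n → Z) → ℝ)
    (hT : ∀ zn, T zn = ⨆ f, ((∑ i, (ℓ f0 (zn i) - ℓ f (zn i))) -
        ∫ yn, ∑ i, (ℓ f0 (yn i) - ℓ f (yn i)) ∂Qf0))
    (hbddq : ∀ zn, BddAbove (Set.range fun f => qn f zn))
    (hbddT : ∀ zn : Fin n → Z, BddAbove (Set.range fun f =>
        (∑ i, (ℓ f0 (zn i) - ℓ f (zn i))) -
          ∫ yn, ∑ i, (ℓ f0 (yn i) - ℓ f (yn i)) ∂Qf0))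
    (hint1 : Integrable (fun zn => ⨆ f, qn f zn) νn)
    (hint2 : Integrable (fun zn => Real.exp (η * T zn)) Qf0)
    (hintloss : ∀ f, Integrable (fun yn => ∑ i, (ℓ f0 (yn i) - ℓ f (yn i))) Qf0) :
    (1/η) * Real.log (∫ zn, ⨆ f, qn f zn ∂νn) ≤
      (1/η) * Real.log (∫ zn, Real.exp (η * T zn) ∂Qf0) := by
  have hAne : ∀ f, A f ≠ 0 := fun f => (hApos f).ne'
  -- nonnegativity
  have hq1nn : ∀ f z, 0 ≤ q1 f z := by
    intro f z; rw [hq1]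
    exact div_nonneg (mul_nonneg (hp z) (Real.exp_nonneg _)) (hApos f).le
  have hqnnn : ∀ f zn, 0 ≤ qn f zn := by
    intro f zn; rw [hqn]; exact Finset.prod_nonneg fun i _ => hq1nn f _
  -- integrability of exp(-ηR f) under P, forced by A f ≠ 0
  have hexp_int : ∀ f, Integrable (fun z => Real.exp (-η * R f z)) P := by
    intro f
    by_contra h
    exact (hApos f).ne' ((hA f).trans (integral_undef h))
  have hmp' : Measurable fun z => Real.toNNReal (p z) := hmp.real_toNNReal
  have hpe_int : ∀ f, Integrable (fun z => p z * Real.exp (-η * R f z)) ν := by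
    intro f
    have h0 := hexp_int f
    rw [hP] at h0
    have h1 := (integrable_withDensity_iff_integrable_smul₀
      (f := fun z => Real.toNNReal (p z)) hmp'.aemeasurable
      (g := fun z => Real.exp (-η * R f z))).mp h0
    exact h1.congr (Filter.Eventually.of_forall fun z => by
      simp [NNReal.smul_def, Real.coe_toNNReal _ (hp z)])
  have hAν : ∀ f, A f = ∫ z, p z * Real.exp (-η * R f z) ∂ν := by
    intro f
    rw [hA, hP]
    have h1 : ∫ z, Real.exp (-η * R f z)
        ∂(ν.withDensity fun z => ENNReal.ofReal (p z)) =
        ∫ z, (Real.toNNReal (p z) : ℝ) • Real.exp (-η * R f z) ∂ν :=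
      integral_withDensity_eq_integral_smul hmp' _
    rw [h1]
    congr 1
    funext z
    simp [Real.coe_toNNReal _ (hp z)]
  have hq1_int : ∀ f, Integrable (q1 f) ν := by
    intro f
    exact ((hpe_int f).div_const (A f)).congr
      (Filter.Eventually.of_forall fun z => (hq1 f z).symm)
  have hq1_I : ∀ f, ∫ z, q1 f z ∂ν = 1 := by
    intro f
    have h1 : ∫ z, q1 f z ∂ν = (∫ z, p z * Real.exp (-η * R f z) ∂ν) / A f := by
      rw [← integral_div]
      exact integral_congr_ae (Filter.Eventually.of_forall fun z => hq1 f z)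
    rw [h1, ← hAν, div_self (hAne f)]
  -- set up product measure as a volume
  letI : MeasureSpace Z := ⟨ν⟩
  haveI : SigmaFinite (volume : Measure Z) := ‹SigmaFinite ν›
  have hvoln : (volume : Measure (Fin n → Z)) = νn := by
    rw [hνn]; exact MeasureTheory.volume_pi
  have hqn_int : ∀ f, Integrable (qn f) νn := by
    intro f
    rw [← hvoln]
    have h1 : Integrable (fun zn : Fin n → Z => ∏ i, q1 f (zn i)) :=
      Integrable.fintype_prod (f := fun _ : Fin n => q1 f) (fun _ => hq1_int f)
    exact h1.congr (Filter.Eventually.of_forall fun zn => (hqn f zn).symm)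
  have hqn_I : ∀ f, ∫ zn, qn f zn ∂νn = 1 := by
    intro f
    rw [← hvoln]
    have h1 : ∫ zn : Fin n → Z, qn f zn = ∫ zn : Fin n → Z, ∏ i, q1 f (zn i) :=
      integral_congr_ae (Filter.Eventually.of_forall fun zn => hqn f zn)
    rw [h1, volume_pi, integral_fintype_prod_eq_pow (ι := Fin n) (q1 f)]
    have h2 : ∫ z, q1 f z = 1 := hq1_I f
    rw [h2, one_pow]
  -- transfers between Qf0 and νn
  have hd0 : AEMeasurable (fun zn => Real.toNNReal (qn f0 zn)) νn :=
    (hqn_int f0).aestronglyMeasurable.aemeasurable.real_toNNReal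
  have hQeq : ∀ g : (Fin n → Z) → ℝ,
      ∫ zn, g zn ∂Qf0 = ∫ zn, qn f0 zn * g zn ∂νn := by
    intro g
    have h1 : ∫ zn, g zn ∂Qf0 =
        ∫ zn, (Real.toNNReal (qn f0 zn) : ℝ) • g zn ∂νn := by
      rw [hQ]; exact integral_withDensity_eq_integral_smul₀ hd0 g
    rw [h1]
    exact integral_congr_ae (Filter.Eventually.of_forall fun zn => by
      simp [Real.coe_toNNReal _ (hqnnn f0 zn)])
  have hQint : ∀ g : (Fin n → Z) → ℝ, Integrable g Qf0 →
      Integrable (fun zn => qn f0 zn * g zn) νn := by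
    intro g hg
    rw [hQ] at hg
    have h1 := (integrable_withDensity_iff_integrable_smul₀
      (f := fun zn => Real.toNNReal (qn f0 zn)) hd0 (g := g)).mp hg
    exact h1.congr (Filter.Eventually.of_forall fun zn => by
      simp [NNReal.smul_def, Real.coe_toNNReal _ (hqnnn f0 zn)])
  -- abbreviations
  let S : F → (Fin n → Z) → ℝ := fun f yn => ∑ i, (ℓ f0 (yn i) - ℓ f (yn i))
  let Eb : F → ℝ := fun f => ∫ yn, S f yn ∂Qf0
  have hT' : ∀ zn, T zn = ⨆ f, (S f zn - Eb f) := hT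
  have hloss' : ∀ f, Integrable (S f) Qf0 := hintloss
  have hbddT' : ∀ zn : Fin n → Z, BddAbove (Set.range fun f => S f zn - Eb f) := hbddT
  -- key density identity
  have hkey : ∀ f zn, qn f zn
      = qn f0 zn * Real.exp (η * S f zn) * (A f0 / A f) ^ n := by
    intro f zn
    have h1 : ∀ z, q1 f z = q1 f0 z * Real.exp (η * (ℓ f0 z - ℓ f z)) * (A f0 / A f) := by
      intro z
      rw [hq1, hq1, hR, hR]
      have e1 : Real.exp (-η * (ℓ f z - ℓ fstar z)) =
          Real.exp (-η * (ℓ f0 z - ℓ fstar z)) * Real.exp (η * (ℓ f0 z - ℓ f z)) := by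
        rw [← Real.exp_add]; congr 1; ring
      rw [e1]
      generalize Real.exp (-η * (ℓ f0 z - ℓ fstar z)) = x
      generalize Real.exp (η * (ℓ f0 z - ℓ f z)) = y
      field_simp [hAne f, hAne f0]
    rw [hqn, hqn]
    simp only [h1]
    rw [Finset.prod_mul_distrib, Finset.prod_mul_distrib, Finset.prod_const,
      ← Real.exp_sum, ← Finset.mul_sum, Finset.card_univ, Fintype.card_fin]
  have hc : ∀ f, (A f0 / A f) ^ n * (A f / A f0) ^ n = 1 := by
    intro f
    rw [← mul_pow, div_mul_div_comm, mul_comm (A f0) (A f),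
      div_self (mul_ne_zero (hAne f) (hAne f0)), one_pow]
  have h2 : ∀ f zn, qn f0 zn * Real.exp (η * S f zn) = qn f zn * (A f / A f0) ^ n := by
    intro f zn
    rw [hkey f zn, mul_assoc (qn f0 zn * Real.exp (η * S f zn)), hc f, mul_one]
  -- the KL-type inequality
  have hKf : ∀ f, Real.exp (η * Eb f) * (A f0 / A f) ^ n ≤ 1 := by
    intro f
    have hupper_eq : ∀ zn, qn f0 zn * Real.exp (η * (S f zn - Eb f))
        = qn f zn * ((A f / A f0) ^ n * Real.exp (-(η * Eb f))) := by
      intro zn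
      have e1 : η * (S f zn - Eb f) = η * S f zn + -(η * Eb f) := by ring
      rw [e1, Real.exp_add, ← mul_assoc, h2 f zn]
      ring
    have i1 := hqn_int f0
    have i2 := hQint (S f) (hloss' f)
    have hrw : (fun zn => qn f0 zn * (1 + η * (S f zn - Eb f)))
        = fun zn => qn f0 zn + (η * (qn f0 zn * S f zn) - (η * Eb f) * qn f0 zn) := by
      funext zn; ring
    have hlow_int : Integrable (fun zn => qn f0 zn * (1 + η * (S f zn - Eb f))) νn := by
      rw [hrw]
      exact i1.add ((i2.const_mul η).sub (i1.const_mul (η * Eb f)))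
    have hup_int : Integrable (fun zn => qn f0 zn * Real.exp (η * (S f zn - Eb f))) νn := by
      have h3 := (hqn_int f).mul_const ((A f / A f0) ^ n * Real.exp (-(η * Eb f)))
      exact h3.congr (Filter.Eventually.of_forall fun zn => (hupper_eq zn).symm)
    have hmono : (fun zn => qn f0 zn * (1 + η * (S f zn - Eb f)))
        ≤ fun zn => qn f0 zn * Real.exp (η * (S f zn - Eb f)) := by
      intro zn
      apply mul_le_mul_of_nonneg_left _ (hqnnn f0 zn)
      have := Real.add_one_le_exp (η * (S f zn - Eb f))
      linarith
    have ia : Integrable (fun zn => η * (qn f0 zn * S f zn)) νn := i2.const_mul η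
    have ib : Integrable (fun zn => η * Eb f * qn f0 zn) νn := i1.const_mul (η * Eb f)
    have ig : Integrable (fun zn => η * (qn f0 zn * S f zn) - η * Eb f * qn f0 zn) νn :=
      ia.sub ib
    have hIlow : ∫ zn, qn f0 zn * (1 + η * (S f zn - Eb f)) ∂νn = 1 := by
      rw [hrw, integral_add i1 ig, integral_sub ia ib,
        integral_const_mul, integral_const_mul, hqn_I f0, ← hQeq (S f)]
      have hEb : ∫ yn, S f yn ∂Qf0 = Eb f := rfl
      rw [hEb]; ring
    have hIup : ∫ zn, qn f0 zn * Real.exp (η * (S f zn - Eb f)) ∂νn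
        = (A f / A f0) ^ n * Real.exp (-(η * Eb f)) := by
      have h4 : ∫ zn, qn f0 zn * Real.exp (η * (S f zn - Eb f)) ∂νn
          = ∫ zn, qn f zn * ((A f / A f0) ^ n * Real.exp (-(η * Eb f))) ∂νn :=
        integral_congr_ae (Filter.Eventually.of_forall fun zn => hupper_eq zn)
      rw [h4, integral_mul_const, hqn_I f, one_mul]
    have hle : (1 : ℝ) ≤ (A f / A f0) ^ n * Real.exp (-(η * Eb f)) := by
      rw [← hIlow, ← hIup]
      exact integral_mono hlow_int hup_int hmono
    have hpos : 0 < Real.exp (η * Eb f) * (A f0 / A f) ^ n :=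
      mul_pos (Real.exp_pos _) (pow_pos (div_pos (hApos f0) (hApos f)) n)
    have h5 : Real.exp (η * Eb f) * (A f0 / A f) ^ n
        * ((A f / A f0) ^ n * Real.exp (-(η * Eb f))) = 1 := by
      have e2 : Real.exp (η * Eb f) * Real.exp (-(η * Eb f)) = 1 := by
        rw [← Real.exp_add]; simp
      calc Real.exp (η * Eb f) * (A f0 / A f) ^ n
          * ((A f / A f0) ^ n * Real.exp (-(η * Eb f)))
          = ((A f0 / A f) ^ n * (A f / A f0) ^ n)
            * (Real.exp (η * Eb f) * Real.exp (-(η * Eb f))) := by ring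
        _ = 1 := by rw [hc f, e2, one_mul]
    calc Real.exp (η * Eb f) * (A f0 / A f) ^ n
        = Real.exp (η * Eb f) * (A f0 / A f) ^ n * 1 := (mul_one _).symm
      _ ≤ Real.exp (η * Eb f) * (A f0 / A f) ^ n
          * ((A f / A f0) ^ n * Real.exp (-(η * Eb f))) :=
        mul_le_mul_of_nonneg_left hle hpos.le
      _ = 1 := h5
  -- pointwise bound on the supremum
  have hpt : ∀ zn, (⨆ f, qn f zn) ≤ qn f0 zn * Real.exp (η * T zn) := by
    intro zn
    refine ciSup_le fun f => ?_
    have h1 : S f zn - Eb f ≤ T zn := by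
      rw [hT' zn]; exact le_ciSup (hbddT' zn) f
    calc qn f zn = qn f0 zn * Real.exp (η * S f zn) * (A f0 / A f) ^ n := hkey f zn
      _ ≤ qn f0 zn * Real.exp (η * (T zn + Eb f)) * (A f0 / A f) ^ n := by
          apply mul_le_mul_of_nonneg_right _ (pow_pos (div_pos (hApos f0) (hApos f)) n).le
          apply mul_le_mul_of_nonneg_left _ (hqnnn f0 zn)
          exact Real.exp_le_exp.mpr (mul_le_mul_of_nonneg_left (by linarith) hη.le)
      _ = qn f0 zn * Real.exp (η * T zn) * (Real.exp (η * Eb f) * (A f0 / A f) ^ n) := by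
          rw [show η * (T zn + Eb f) = η * T zn + η * Eb f by ring, Real.exp_add]; ring
      _ ≤ qn f0 zn * Real.exp (η * T zn) * 1 :=
          mul_le_mul_of_nonneg_left (hKf f)
            (mul_nonneg (hqnnn f0 zn) (Real.exp_nonneg _))
      _ = qn f0 zn * Real.exp (η * T zn) := mul_one _
  have hint2' : Integrable (fun zn => qn f0 zn * Real.exp (η * T zn)) νn := hQint _ hint2
  have hmain : ∫ zn, (⨆ f, qn f zn) ∂νn ≤ ∫ zn, Real.exp (η * T zn) ∂Qf0 := by
    rw [hQeq]
    exact integral_mono hint1 hint2' hpt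
  have hnn : 0 ≤ ∫ zn, (⨆ f, qn f zn) ∂νn :=
    integral_nonneg fun zn => le_trans (hqnnn f0 zn) (le_ciSup (hbddq zn) f0)
  have hT0 : ∀ zn, 0 ≤ T zn := by
    intro zn
    have hS0 : S f0 zn = 0 := by simp [S]
    have hE0 : Eb f0 = 0 := by
      have : ∫ yn, S f0 yn ∂Qf0 = 0 := by simp [S]
      exact this
    rw [hT' zn]
    calc (0:ℝ) = S f0 zn - Eb f0 := by rw [hS0, hE0]; ring
      _ ≤ _ := le_ciSup (hbddT' zn) f0
  have hge1 : 1 ≤ ∫ zn, Real.exp (η * T zn) ∂Qf0 := by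
    rw [hQeq]
    calc (1:ℝ) = ∫ zn, qn f0 zn ∂νn := (hqn_I f0).symm
      _ ≤ ∫ zn, qn f0 zn * Real.exp (η * T zn) ∂νn := by
          apply integral_mono (hqn_int f0) hint2'
          intro zn
          exact le_mul_of_one_le_right (hqnnn f0 zn)
            (Real.one_le_exp (mul_nonneg hη.le (hT0 zn)))
  apply mul_le_mul_of_nonneg_left _ (by positivity : (0:ℝ) ≤ 1/η)
  rcases eq_or_lt_of_le hnn with h0 | h0
  · rw [← h0, Real.log_zero]
    exact Real.log_nonneg hge1
  · exact Real.log_le_log h0 hmain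
end

section
/- Extended Haussler theorem: Let F be a class of functions on a space S such that for all ε > 0 and all n and all points s_1,...,s_n ∈ S, the L_2(P_n)-covering number of F at radius ε is at most ψ(ε), where P_n is the empirical measure on s_1,...,s_n. Then for every probability measure P on S and every ε > 0, the L_2(P)-covering number satisfies N(F, L_2(P), ε) ≤ ψ(ε/2). -/
open MeasureTheory
open scoped ENNReal NNReal

lemma emp_triangle {S : Type*} {n : ℕ} (s : Fin n → S) (f g h : S → ℝ) :
    Real.sqrt ((1/(n:ℝ)) * ∑ j, (f (s j) - h (s j))^2) ≤
      Real.sqrt ((1/(n:ℝ)) * ∑ j, (f (s j) - g (s j))^2) +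
      Real.sqrt ((1/(n:ℝ)) * ∑ j, (g (s j) - h (s j))^2) := by
  have hn : (0:ℝ) ≤ 1/(n:ℝ) := by positivity
  have key : ∀ a b : S → ℝ,
      Real.sqrt ((1/(n:ℝ)) * ∑ j, (a (s j) - b (s j))^2) =
        Real.sqrt (1/(n:ℝ)) *
          ‖(WithLp.equiv 2 (Fin n → ℝ)).symm (fun j => a (s j) - b (s j))‖ := by
    intro a b
    rw [Real.sqrt_mul hn, EuclideanSpace.norm_eq]
    congr 2
    refine Finset.sum_congr rfl fun j _ => ?_
    simp [Real.norm_eq_abs, sq_abs]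
  rw [key f h, key f g, key g h, ← mul_add]
  refine mul_le_mul_of_nonneg_left ?_ (Real.sqrt_nonneg _)
  have : (WithLp.equiv 2 (Fin n → ℝ)).symm (fun j => f (s j) - h (s j)) =
      (WithLp.equiv 2 (Fin n → ℝ)).symm (fun j => f (s j) - g (s j)) +
      (WithLp.equiv 2 (Fin n → ℝ)).symm (fun j => g (s j) - h (s j)) := by
    ext j
    simp [PiLp.add_apply]

  rw [this]
  exact norm_add_le _ _

lemma pi_integral_eval {S : Type*} [MeasureSpace S] [IsProbabilityMeasure (volume : Measure S)]
    {n : ℕ} (h : S → ℝ) (j : Fin n) :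
    ∫ x : Fin n → S, h (x j) = ∫ s, h s := by
  classical
  have := MeasureTheory.integral_fintype_prod_eq_prod (𝕜 := ℝ) (ι := Fin n) (μ := fun _ => volume)
    (fun i => if i = j then h else fun _ => (1:ℝ))
  have hL : (fun x : Fin n → S => ∏ i, (if i = j then h else fun _ => (1:ℝ)) (x i))
      = fun x => h (x j) := by
    funext x
    rw [show (∏ i, (if i = j then h else fun _ => (1:ℝ)) (x i))
        = ∏ i, (if i = j then h (x i) else 1) from Finset.prod_congr rfl
          (fun i _ => by split <;> simp_all)]
    simp [Finset.prod_ite_eq']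
  have hR : (∏ i : Fin n, ∫ x, (if i = j then h else fun _ => (1:ℝ)) x)
      = ∏ i : Fin n, (if i = j then (∫ s, h s) else 1) := by
    refine Finset.prod_congr rfl fun i _ => ?_
    split <;> simp_all
  rw [hL, ← volume_pi] at this
  rw [this, hR]
  simp [Finset.prod_ite_eq']

lemma pi_integral_eval_mul {S : Type*} [MeasureSpace S] [IsProbabilityMeasure (volume : Measure S)]
    {n : ℕ} (h₁ h₂ : S → ℝ) {j j' : Fin n} (hjj : j ≠ j') :
    ∫ x : Fin n → S, h₁ (x j) * h₂ (x j') = (∫ s, h₁ s) * ∫ s, h₂ s := by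
  classical
  set F : Fin n → S → ℝ := fun i => if i = j then h₁ else if i = j' then h₂ else fun _ => 1
    with hF
  have key := MeasureTheory.integral_fintype_prod_eq_prod (𝕜 := ℝ) (ι := Fin n) (μ := fun _ => volume) F
  have prodeq : ∀ a b : ℝ, (∏ i : Fin n, (if i = j then a else if i = j' then b else 1))
      = a * b := by
    intro a b
    rw [← Finset.mul_prod_erase Finset.univ _ (Finset.mem_univ j), if_pos rfl]
    congr 1
    rw [← Finset.mul_prod_erase _ _
      (Finset.mem_erase.2 ⟨Ne.symm hjj, Finset.mem_univ j'⟩),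
      if_neg (Ne.symm hjj), if_pos rfl, Finset.prod_eq_one, mul_one]
    intro i hi
    simp only [Finset.mem_erase] at hi
    rw [if_neg hi.2.1, if_neg hi.1]
  have hL : (fun x : Fin n → S => ∏ i, F i (x i)) = fun x => h₁ (x j) * h₂ (x j') := by
    funext x
    rw [show (∏ i, F i (x i))
        = ∏ i, (if i = j then h₁ (x j) else if i = j' then h₂ (x j') else 1) from
      Finset.prod_congr rfl (fun i _ => by
        simp only [hF]
        split
        · subst ‹i = j›; rfl
        · split
          · subst ‹i = j'›; rfl
          · rfl)]
    exact prodeq _ _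
  have hR : (∏ i : Fin n, ∫ x, F i x)
      = ∏ i : Fin n, (if i = j then (∫ s, h₁ s) else if i = j' then (∫ s, h₂ s) else 1) := by
    refine Finset.prod_congr rfl fun i _ => ?_
    simp only [hF]
    split
    · rfl
    · split
      · rfl
      · simp
  rw [hL, ← volume_pi] at key
  rw [key, hR, prodeq]

lemma integrable_of_bdd {Ω : Type*} [MeasurableSpace Ω] {μ : Measure Ω} [IsProbabilityMeasure μ]
    {f : Ω → ℝ} (hf : Measurable f) {C : ℝ} (hC : ∀ x, |f x| ≤ C) : Integrable f μ :=
  Integrable.mono' (integrable_const C) hf.aestronglyMeasurable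
    (ae_of_all _ fun x => by rw [Real.norm_eq_abs]; exact hC x)

set_option maxHeartbeats 1000000

lemma exists_good_sample {S : Type*} [MeasureSpace S]
    [IsProbabilityMeasure (volume : Measure S)]
    {ι : Type*} (K : Finset ι) (h : ι → S → ℝ)
    (hm : ∀ k ∈ K, Measurable (h k)) (B : ℝ) (hB : ∀ k ∈ K, ∀ s, |h k s| ≤ B)
    (c : ℝ) (hc : ∀ k ∈ K, c < ∫ s, h k s) :
    ∃ (n : ℕ) (s : Fin n → S), ∀ k ∈ K, c < (1/(n:ℝ)) * ∑ j, h k (s j) := by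
  classical
  rcases K.eq_empty_or_nonempty with rfl | hK
  · exact ⟨0, Fin.elim0, fun k hk => absurd hk (Finset.notMem_empty k)⟩
  -- setup
  set m : ι → ℝ := fun k => ∫ s, h k s with hm_def
  set δ : ℝ := K.inf' hK (fun k => m k - c) with hδ_def
  have hδpos : 0 < δ := by
    rw [hδ_def, Finset.lt_inf'_iff]
    exact fun k hk => sub_pos.2 (hc k hk)
  have hδle : ∀ k ∈ K, δ ≤ m k - c := fun k hk => Finset.inf'_le _ hk
  set n : ℕ := ⌊(K.card : ℝ) * (2*B)^2 / δ^2⌋₊ + 1 with hn_def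
  have hnpos : 0 < n := Nat.succ_pos _
  have hnR : (0:ℝ) < n := by exact_mod_cast hnpos
  have hnbig : (K.card : ℝ) * (2*B)^2 / δ^2 < n := by
    rw [hn_def]; push_cast; exact Nat.lt_floor_add_one _
  set μn : Measure (Fin n → S) := volume with hμn_def
  haveI : IsProbabilityMeasure μn := by
    rw [hμn_def, volume_pi]; infer_instance
  have hB0 : 0 ≤ B := by
    have := hc hK.choose hK.choose_spec
    by_contra hB0
    push_neg at hB0
    have hint0 : Integrable (h hK.choose) volume :=
      integrable_of_bdd (hm _ hK.choose_spec) (hB _ hK.choose_spec)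
    have : |∫ s, h hK.choose s| ≤ B := by
      have := norm_integral_le_of_norm_le_const
        (C := B) (f := h hK.choose) (μ := volume)
        (ae_of_all _ fun s => by rw [Real.norm_eq_abs]; exact hB _ hK.choose_spec s)
      simpa [Real.norm_eq_abs] using this
    nlinarith [abs_nonneg (∫ s, h hK.choose s)]
  have hmB : ∀ k ∈ K, |m k| ≤ B := by
    intro k hk
    have := norm_integral_le_of_norm_le_const
      (C := B) (f := h k) (μ := (volume : Measure S))
      (ae_of_all _ fun s => by rw [Real.norm_eq_abs]; exact hB k hk s)
    simpa [Real.norm_eq_abs] using this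
  have hint : ∀ k ∈ K, Integrable (h k) volume := fun k hk =>
    integrable_of_bdd (hm k hk) (hB k hk)
  have hbd2 : ∀ k ∈ K, ∀ s, |h k s - m k| ≤ 2*B := fun k hk s => by
    have := hB k hk s; have := hmB k hk
    rw [abs_le] at *; constructor <;> linarith [this.1, this.2]
  -- variance bound
  set V : ι → ℝ := fun k => ∫ s, (h k s - m k)^2 with hV_def
  have hVbd : ∀ k ∈ K, V k ≤ (2*B)^2 := by
    intro k hk
    have hle : ∀ s, (h k s - m k)^2 ≤ (2*B)^2 := fun s => by
      have h1 := hbd2 k hk s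
      nlinarith [abs_nonneg (h k s - m k), sq_abs (h k s - m k)]
    calc V k ≤ ∫ _s : S, (2*B)^2 := by
          refine integral_mono ?_ (integrable_const _) hle
          exact integrable_of_bdd (((hm k hk).sub measurable_const).pow_const 2)
            (fun s => by rw [abs_of_nonneg (sq_nonneg _)]; exact hle s)
      _ = (2*B)^2 := by simp
  have hV0 : ∀ k ∈ K, 0 ≤ V k := fun k hk => integral_nonneg fun s => sq_nonneg _
  -- the deviation variable
  set Z : ι → (Fin n → S) → ℝ := fun k x => ((1/(n:ℝ)) * ∑ j, h k (x j) - m k)^2 with hZ_def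
  have hZmeas : ∀ k ∈ K, Measurable (Z k) := by
    intro k hk
    apply Measurable.pow_const
    apply Measurable.sub_const
    exact (Finset.measurable_sum _ fun j _ =>
      (hm k hk).comp (measurable_pi_apply j)).const_mul _
  have hZbd : ∀ k ∈ K, ∀ x, |Z k x| ≤ (2*B)^2 := by
    intro k hk x
    rw [hZ_def, abs_of_nonneg (sq_nonneg _)]
    have h1 : |(1/(n:ℝ)) * ∑ j, h k (x j) - m k| ≤ 2*B := by
      have h2 : (1/(n:ℝ)) * ∑ j, h k (x j) - m k = (1/(n:ℝ)) * ∑ j, (h k (x j) - m k) := by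
        rw [Finset.sum_sub_distrib, Finset.sum_const, Finset.card_univ, Fintype.card_fin,
          nsmul_eq_mul]
        field_simp
      rw [h2, abs_mul, abs_of_nonneg (by positivity : (0:ℝ) ≤ 1/(n:ℝ))]
      calc (1/(n:ℝ)) * |∑ j, (h k (x j) - m k)| ≤ (1/(n:ℝ)) * ∑ j : Fin n, (2*B) := by
            apply mul_le_mul_of_nonneg_left _ (by positivity)
            exact le_trans (Finset.abs_sum_le_sum_abs _ _)
              (Finset.sum_le_sum fun j _ => hbd2 k hk (x j))
        _ = 2*B := by
            rw [Finset.sum_const, Finset.card_univ, Fintype.card_fin, nsmul_eq_mul]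
            field_simp
    nlinarith [abs_nonneg ((1/(n:ℝ)) * ∑ j, h k (x j) - m k),
      sq_abs ((1/(n:ℝ)) * ∑ j, h k (x j) - m k)]
  have hZint : ∀ k ∈ K, Integrable (Z k) μn :=
    fun k hk => integrable_of_bdd (hZmeas k hk) (hZbd k hk)
  -- expectation of Z
  have hEZ : ∀ k ∈ K, ∫ x, Z k x ∂μn ≤ (2*B)^2 / n := by
    intro k hk
    have hsum : ∀ x : Fin n → S, Z k x
        = (1/(n:ℝ))^2 * ∑ j : Fin n, ∑ j' : Fin n, (h k (x j) - m k) * (h k (x j') - m k) := by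
      intro x
      simp only [hZ_def]
      have h2 : (1/(n:ℝ)) * ∑ j, h k (x j) - m k = (1/(n:ℝ)) * ∑ j, (h k (x j) - m k) := by
        rw [Finset.sum_sub_distrib, Finset.sum_const, Finset.card_univ, Fintype.card_fin,
          nsmul_eq_mul]
        field_simp
      rw [h2, mul_pow, sq (∑ j, (h k (x j) - m k)), Finset.sum_mul_sum]
    have hterm_int : ∀ (j j' : Fin n),
        Integrable (fun x : Fin n → S => (h k (x j) - m k) * (h k (x j') - m k)) μn := by
      intro j j'
      apply integrable_of_bdd
      · exact (((hm k hk).comp (measurable_pi_apply j)).sub_const _).mul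
          (((hm k hk).comp (measurable_pi_apply j')).sub_const _)
      · intro x
        rw [abs_mul]
        calc |h k (x j) - m k| * |h k (x j') - m k| ≤ (2*B) * (2*B) :=
              mul_le_mul (hbd2 k hk _) (hbd2 k hk _) (abs_nonneg _) (by positivity)
          _ = (2*B)^2 := by ring
    have hterm : ∀ (j j' : Fin n),
        ∫ x : Fin n → S, (h k (x j) - m k) * (h k (x j') - m k) ∂μn
          = if j = j' then V k else 0 := by
      intro j j'
      by_cases hjj : j = j'
      · subst hjj
        rw [if_pos rfl, hV_def]
        have : (fun x : Fin n → S => (h k (x j) - m k) * (h k (x j) - m k))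
            = fun x => (fun s => (h k s - m k)^2) (x j) := by
          funext x; ring
        rw [hμn_def, this]
        exact pi_integral_eval (S := S) (fun s => (h k s - m k)^2) j
      · rw [if_neg hjj, hμn_def]
        rw [pi_integral_eval_mul (fun s => h k s - m k) (fun s => h k s - m k) hjj]
        have : ∫ s, (h k s - m k) = 0 := by
          rw [integral_sub (hint k hk) (integrable_const _), integral_const]
          simp [hm_def]
        rw [this, mul_zero]
    calc ∫ x, Z k x ∂μn
        = (1/(n:ℝ))^2 * ∑ j : Fin n, ∑ j' : Fin n,
            ∫ x, (h k (x j) - m k) * (h k (x j') - m k) ∂μn := by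
          simp_rw [hsum]
          rw [integral_const_mul, integral_finset_sum _ (fun j _ =>
            integrable_finset_sum _ (fun j' _ => hterm_int j j'))]
          congr 1
          exact Finset.sum_congr rfl fun j _ => integral_finset_sum _ fun j' _ => hterm_int j j'
      _ = (1/(n:ℝ))^2 * (n * V k) := by
          congr 1
          simp_rw [hterm]
          simp [Finset.sum_ite_eq]
      _ = V k / n := by field_simp
      _ ≤ (2*B)^2 / n := by gcongr; exact hVbd k hk
  -- Chebyshev / Markov bound
  set q : ℝ := (2*B)^2 / (n * δ^2) with hq_def
  have hq0 : 0 ≤ q := by positivity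
  have hcheb : ∀ k ∈ K, μn {x | δ^2 ≤ Z k x} ≤ ENNReal.ofReal q := by
    intro k hk
    have hmar := mul_meas_ge_le_integral_of_nonneg (μ := μn)
      (f := Z k) (ae_of_all _ fun x => sq_nonneg _) (hZint k hk) (δ^2)
    have h1 : (μn {x | δ^2 ≤ Z k x}).toReal ≤ q := by
      have hδ2 : (0:ℝ) < δ^2 := by positivity
      have h2 : δ^2 * (μn {x | δ^2 ≤ Z k x}).toReal ≤ (2*B)^2 / n :=
        le_trans hmar (hEZ k hk)
      rw [hq_def, show (2*B)^2 / (↑n * δ^2) = (2*B)^2 / ↑n / δ^2 from (div_div _ _ _).symm,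
        le_div_iff₀ hδ2]
      linarith
    calc μn {x | δ^2 ≤ Z k x}
        = ENNReal.ofReal ((μn {x | δ^2 ≤ Z k x}).toReal) :=
          (ENNReal.ofReal_toReal (measure_ne_top _ _)).symm
      _ ≤ ENNReal.ofReal q := ENNReal.ofReal_le_ofReal h1
  have hunion : μn (⋃ k ∈ K, {x | δ^2 ≤ Z k x}) < 1 := by
    calc μn (⋃ k ∈ K, {x | δ^2 ≤ Z k x}) ≤ ∑ k ∈ K, μn {x | δ^2 ≤ Z k x} :=
          measure_biUnion_finset_le K _
      _ ≤ ∑ k' ∈ K, ENNReal.ofReal q := Finset.sum_le_sum fun k hk => hcheb k hk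
      _ = (K.card : ℝ≥0∞) * ENNReal.ofReal q := by
          rw [Finset.sum_const, nsmul_eq_mul]
      _ = ENNReal.ofReal ((K.card : ℝ) * q) := by
          rw [ENNReal.ofReal_mul (Nat.cast_nonneg K.card : (0:ℝ) ≤ K.card)]
          congr 1
          exact (ENNReal.ofReal_natCast _).symm
      _ < 1 := by
          rw [show (1 : ℝ≥0∞) = ENNReal.ofReal 1 by simp]
          apply ENNReal.ofReal_lt_ofReal_iff_of_nonneg (mul_nonneg (Nat.cast_nonneg _) hq0) |>.2
          have hδ2 : (0:ℝ) < δ^2 := by positivity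
          have h1 : (K.card:ℝ) * (2*B)^2 < n * δ^2 := by
            rw [div_lt_iff₀ hδ2] at hnbig; linarith
          rw [hq_def, mul_div_assoc']
          rw [div_lt_one (by positivity)]
          exact h1
  obtain ⟨x, hx⟩ : ∃ x, x ∉ ⋃ k ∈ K, {x | δ^2 ≤ Z k x} := by
    by_contra hx
    push_neg at hx
    have : (⋃ k ∈ K, {x | δ^2 ≤ Z k x}) = Set.univ := Set.eq_univ_of_forall hx
    rw [this, measure_univ] at hunion
    exact lt_irrefl _ hunion
  refine ⟨n, x, fun k hk => ?_⟩
  have hxk : ¬ (δ^2 ≤ Z k x) := by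
    intro hge
    exact hx (Set.mem_biUnion hk hge)
  push_neg at hxk
  have habs : |(1/(n:ℝ)) * ∑ j, h k (x j) - m k| < δ := by
    have : ((1/(n:ℝ)) * ∑ j, h k (x j) - m k)^2 < δ^2 := hxk
    nlinarith [abs_nonneg ((1/(n:ℝ)) * ∑ j, h k (x j) - m k),
      sq_abs ((1/(n:ℝ)) * ∑ j, h k (x j) - m k)]
  have h2 := abs_lt.1 habs
  have h3 := hδle k hk
  linarith [h2.1]

/-- Extended Haussler theorem: if for all n and all empirical measures P_n the
L₂(P_n)-covering numbers of F at radius ε are bounded by ψ(ε), then for every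
probability measure P, N(F, L₂(P), ε) ≤ ψ(ε/2). -/
theorem extended_haussler {S : Type*} [MeasurableSpace S]
    (F : Set (S → ℝ)) (ψ : ℝ → ℕ)
    (M : ℝ) (hbdd : ∀ f ∈ F, ∀ s, |f s| ≤ M)
    (hmeas : ∀ f ∈ F, Measurable f)
    (hemp : ∀ (n : ℕ) (s : Fin n → S) (ε : ℝ), 0 < ε →
      ∃ T : Finset (S → ℝ), T.card ≤ ψ ε ∧
        ∀ f ∈ F, ∃ g ∈ T,
          Real.sqrt ((1/(n:ℝ)) * ∑ j, (f (s j) - g (s j))^2) ≤ ε) :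
    ∀ (P : Measure S), IsProbabilityMeasure P → ∀ ε : ℝ, 0 < ε →
      ∃ T : Finset (S → ℝ), T.card ≤ ψ (ε/2) ∧
        ∀ f ∈ F, ∃ g ∈ T, Real.sqrt (∫ s, (f s - g s)^2 ∂P) ≤ ε := by
  classical
  intro P hP ε hε
  letI mS : MeasureSpace S := { toMeasurableSpace := ‹MeasurableSpace S›, volume := P }
  haveI : IsProbabilityMeasure (volume : Measure S) := hP
  -- symmetry of L2 distance
  have hsymm : ∀ u v : S → ℝ, ∫ s, (u s - v s)^2 ∂P = ∫ s, (v s - u s)^2 ∂P := by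
    intro u v
    congr 1
    funext s
    ring
  -- nonnegativity of L2 integrals
  have hnn : ∀ u v : S → ℝ, 0 ≤ ∫ s, (u s - v s)^2 ∂P :=
    fun u v => integral_nonneg fun s => sq_nonneg _
  set IsPacking : Finset (S → ℝ) → Prop := fun T =>
    ↑T ⊆ F ∧ ∀ f ∈ T, ∀ g ∈ T, f ≠ g → ε < Real.sqrt (∫ s, (f s - g s)^2 ∂P)
    with hIsPacking
  -- every packing has cardinality at most ψ (ε/2)
  have hpackbound : ∀ T, IsPacking T → T.card ≤ ψ (ε/2) := by
    rintro T ⟨hTF, hTp⟩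
    set K : Finset ((S → ℝ) × (S → ℝ)) := (T ×ˢ T).filter (fun p => p.1 ≠ p.2) with hK_def
    have hmemK : ∀ p ∈ K, p.1 ∈ F ∧ p.2 ∈ F ∧ p.1 ∈ T ∧ p.2 ∈ T ∧ p.1 ≠ p.2 := by
      intro p hp
      rw [hK_def, Finset.mem_filter, Finset.mem_product] at hp
      exact ⟨hTF hp.1.1, hTF hp.1.2, hp.1.1, hp.1.2, hp.2⟩
    obtain ⟨n, s, hs⟩ := exists_good_sample K (fun p x => (p.1 x - p.2 x)^2)
      (fun p hp => (((hmeas _ (hmemK p hp).1).sub (hmeas _ (hmemK p hp).2.1)).pow_const 2))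
      ((2*M)^2)
      (fun p hp x => by
        have h1 := hbdd _ (hmemK p hp).1 x
        have h2 := hbdd _ (hmemK p hp).2.1 x
        show |(p.1 x - p.2 x)^2| ≤ (2*M)^2
        rw [abs_of_nonneg (sq_nonneg _)]
        have h3 : |p.1 x - p.2 x| ≤ 2*M := by
          rw [abs_le] at *
          constructor <;> linarith [h1.1, h1.2, h2.1, h2.2]
        nlinarith [abs_nonneg (p.1 x - p.2 x), sq_abs (p.1 x - p.2 x)])
      (ε^2)
      (fun p hp => by
        have := hTp _ (hmemK p hp).2.2.1 _ (hmemK p hp).2.2.2.1 (hmemK p hp).2.2.2.2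
        have h0 : 0 ≤ ∫ s, (p.1 s - p.2 s)^2 ∂P := hnn _ _
        exact (Real.lt_sqrt hε.le).1 this)
    obtain ⟨T', hT'card, hT'cov⟩ := hemp n s (ε/2) (by linarith)
    refine le_trans ?_ hT'card
    by_contra hcard
    push_neg at hcard
    -- pigeonhole
    have hchoice : ∀ f ∈ T, ∃ g, g ∈ T' ∧
        Real.sqrt ((1/(n:ℝ)) * ∑ j, (f (s j) - g (s j))^2) ≤ ε/2 := by
      intro f hf
      obtain ⟨g, hg, hgle⟩ := hT'cov f (hTF hf)
      exact ⟨g, hg, hgle⟩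
    set φ : (S → ℝ) → (S → ℝ) := fun f =>
      if h : ∃ g, g ∈ T' ∧ Real.sqrt ((1/(n:ℝ)) * ∑ j, (f (s j) - g (s j))^2) ≤ ε/2
      then h.choose else f with hφ
    have hφmem : ∀ f ∈ T, φ f ∈ T' := by
      intro f hf
      rw [hφ]
      simp only
      rw [dif_pos (hchoice f hf)]
      exact (hchoice f hf).choose_spec.1
    have hφdist : ∀ f ∈ T,
        Real.sqrt ((1/(n:ℝ)) * ∑ j, (f (s j) - φ f (s j))^2) ≤ ε/2 := by
      intro f hf
      rw [hφ]
      simp only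
      rw [dif_pos (hchoice f hf)]
      exact (hchoice f hf).choose_spec.2
    obtain ⟨f₁, hf₁, f₂, hf₂, hne, heq⟩ :=
      Finset.exists_ne_map_eq_of_card_lt_of_maps_to hcard hφmem
    -- empirical symmetry
    have hesymm : ∀ u v : S → ℝ, ((1/(n:ℝ)) * ∑ j, (u (s j) - v (s j))^2)
        = ((1/(n:ℝ)) * ∑ j, (v (s j) - u (s j))^2) := by
      intro u v
      congr 1
      exact Finset.sum_congr rfl fun j _ => by ring
    have htri := emp_triangle s f₁ (φ f₁) f₂
    have h2 : Real.sqrt ((1/(n:ℝ)) * ∑ j, (φ f₁ (s j) - f₂ (s j))^2) ≤ ε/2 := by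
      rw [hesymm]
      rw [heq]
      exact hφdist f₂ hf₂
    have h3 : Real.sqrt ((1/(n:ℝ)) * ∑ j, (f₁ (s j) - f₂ (s j))^2) ≤ ε := by
      have := hφdist f₁ hf₁
      calc Real.sqrt ((1/(n:ℝ)) * ∑ j, (f₁ (s j) - f₂ (s j))^2)
          ≤ _ + _ := htri
        _ ≤ ε/2 + ε/2 := add_le_add (hφdist f₁ hf₁) h2
        _ = ε := by ring
    -- but the sample separates f₁ f₂
    have hp12 : (f₁, f₂) ∈ K := by
      rw [hK_def, Finset.mem_filter, Finset.mem_product]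
      exact ⟨⟨hf₁, hf₂⟩, hne⟩
    have h4 := hs _ hp12
    simp only at h4
    have h5 : ε < Real.sqrt ((1/(n:ℝ)) * ∑ j, (f₁ (s j) - f₂ (s j))^2) :=
      (Real.lt_sqrt hε.le).2 h4
    linarith
  -- maximal packing
  set A : Set ℕ := {k | ∃ T, IsPacking T ∧ T.card = k} with hA
  have h0A : 0 ∈ A := ⟨∅, ⟨by simp, by simp⟩, rfl⟩
  have hbddA : BddAbove A := by
    refine ⟨ψ (ε/2), fun k hk => ?_⟩
    obtain ⟨T, hT, rfl⟩ := hk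
    exact hpackbound T hT
  have hmem := Nat.sSup_mem ⟨0, h0A⟩ hbddA
  obtain ⟨T, hTpack, hTcard⟩ := hmem
  refine ⟨T, hTcard ▸ hpackbound T hTpack, ?_⟩
  intro f hf
  by_contra hcov
  push_neg at hcov
  have hfT : f ∉ T := by
    intro hfT
    have := hcov f hfT
    have : ε < Real.sqrt (∫ s, (f s - f s)^2 ∂P) := this
    simp at this
    linarith
  have hpack' : IsPacking (insert f T) := by
    constructor
    · rw [Finset.coe_insert]
      exact Set.insert_subset hf hTpack.1
    · intro u hu v hv huv
      rw [Finset.mem_insert] at hu hv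
      rcases hu with rfl | hu
      · rcases hv with rfl | hv
        · exact absurd rfl huv
        · exact hcov v hv
      · rcases hv with rfl | hv
        · rw [hsymm]
          exact hcov u hu
        · exact hTpack.2 u hu v hv huv
  have : T.card + 1 ∈ A := ⟨insert f T, hpack', Finset.card_insert_of_notMem hfT⟩
  have hle := le_csSup hbddA this
  rw [hTcard] at hle
  omega
end

section
/- Constant luckiness upper bound: for any randomized estimator Π̂ and the constant luckiness function w ≡ 1, for every z^n, comp(F, Π̂, w, z^n) ≤ comp(F) := (1/η) log ∫ sup_{f∈F} q_f(z^n) dν(z^n), assuming comp(F) < ∞. -/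
open MeasureTheory

/-- Proposition 3: for any randomized estimator Π̂ and constant luckiness w ≡ 1,
the complexity comp(F, Π̂, 1, z^n) = (1/η) log S(F, Π̂, 1) is bounded by the maximal
complexity comp(F) = (1/η) log E_{Z^n∼P}[sup_f exp(-η R_f(Z^n))/C(f)]. -/
theorem comp_randomized_le_maximal {Zn F : Type*} [MeasurableSpace Zn] [MeasurableSpace F]
    [Nonempty F]
    (μ : Measure Zn) [IsProbabilityMeasure μ] (ρ : Measure F) [SigmaFinite ρ]
    (η : ℝ) (hη : 0 < η)
    (R : F → Zn → ℝ) (hmeas : Measurable (Function.uncurry R))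
    (C : F → ℝ) (hC : ∀ f, C f = ∫ zn, Real.exp (-η * R f zn) ∂μ)
    (hCpos : ∀ f, 0 < C f)
    (πhat : Zn → F → ℝ) (hπhatpos : ∀ zn f, 0 ≤ πhat zn f)
    (hπhat1 : ∀ zn, ∫ f, πhat zn f ∂ρ = 1)
    (hbdd : ∀ zn, BddAbove (Set.range fun f => Real.exp (-η * R f zn) / C f))
    (hintsup : Integrable (fun zn => ⨆ f, Real.exp (-η * R f zn) / C f) μ)
    (hinner : ∀ zn, Integrable (fun f => πhat zn f * (η * R f zn + Real.log (C f))) ρ)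
    (hintS : Integrable (fun zn =>
        Real.exp (- ∫ f, πhat zn f * (η * R f zn + Real.log (C f)) ∂ρ)) μ)
    (hpos : 0 < ∫ zn, ⨆ f, Real.exp (-η * R f zn) / C f ∂μ)
    (hSpos : 0 < ∫ zn,
        Real.exp (- ∫ f, πhat zn f * (η * R f zn + Real.log (C f)) ∂ρ) ∂μ) :
    (1/η) * Real.log (∫ zn,
        Real.exp (- ∫ f, πhat zn f * (η * R f zn + Real.log (C f)) ∂ρ) ∂μ)
      ≤ (1/η) * Real.log (∫ zn, ⨆ f, Real.exp (-η * R f zn) / C f ∂μ) := by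
  have hpointwise : ∀ zn,
      Real.exp (- ∫ f, πhat zn f * (η * R f zn + Real.log (C f)) ∂ρ)
        ≤ ⨆ f, Real.exp (-η * R f zn) / C f := by
    intro zn
    set S : ℝ := ⨆ f, Real.exp (-η * R f zn) / C f with hS
    obtain ⟨f0⟩ := ‹Nonempty F›
    have hle : ∀ f, Real.exp (-η * R f zn) / C f ≤ S := fun f =>
      le_ciSup (hbdd zn) f
    have hSpos' : 0 < S :=
      lt_of_lt_of_le (div_pos (Real.exp_pos _) (hCpos f0)) (hle f0)
    -- each h f := η R f zn + log C f ≥ - log S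
    have hlb : ∀ f, -Real.log S ≤ η * R f zn + Real.log (C f) := by
      intro f
      have h1 : Real.exp (-(η * R f zn + Real.log (C f))) ≤ S := by
        have : Real.exp (-(η * R f zn + Real.log (C f)))
            = Real.exp (-η * R f zn) / C f := by
          rw [neg_add, Real.exp_add, Real.exp_neg (Real.log (C f)),
            Real.exp_log (hCpos f), div_eq_mul_inv, neg_mul]
        rw [this]; exact hle f
      have := Real.log_le_log (Real.exp_pos _) h1
      rw [Real.log_exp] at this
      linarith
    -- πhat zn integrable
    have hπint : Integrable (fun f => πhat zn f) ρ := by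
      by_contra h
      have := integral_undef h
      rw [hπhat1 zn] at this
      norm_num at this
    -- ∫ πhat h ≥ -log S
    have hge : -Real.log S ≤ ∫ f, πhat zn f * (η * R f zn + Real.log (C f)) ∂ρ := by
      have : ∫ f, πhat zn f * (-Real.log S) ∂ρ
          ≤ ∫ f, πhat zn f * (η * R f zn + Real.log (C f)) ∂ρ := by
        apply integral_mono (hπint.mul_const _) (hinner zn)
        intro f
        exact mul_le_mul_of_nonneg_left (hlb f) (hπhatpos zn f)
      rwa [integral_mul_const, hπhat1 zn, one_mul] at this
    calc Real.exp (- ∫ f, πhat zn f * (η * R f zn + Real.log (C f)) ∂ρ)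
        ≤ Real.exp (Real.log S) := Real.exp_le_exp.mpr (by linarith)
      _ = S := Real.exp_log hSpos'
  have hint : (∫ zn, Real.exp (- ∫ f, πhat zn f * (η * R f zn + Real.log (C f)) ∂ρ) ∂μ)
      ≤ ∫ zn, ⨆ f, Real.exp (-η * R f zn) / C f ∂μ :=
    integral_mono hintS hintsup hpointwise
  have := Real.log_le_log hSpos hint
  have h1η : 0 ≤ 1 / η := by positivity
  exact mul_le_mul_of_nonneg_left this h1η
end
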